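/- arXiv:1305.0375 — 4 statements merged into one kernel-verified Lean document; each statement's English description precedes it below -/
import Mathlib

section
/- Let d ≥ 1 and let (U(s,t))_{s≤t} be a Feller evolution system on C₀(ℝ^d). For f ∈ C₀(ℝ × ℝ^d) and t ≥ 0 define T(t)f(s,x) := (U(s,s+t) f(s+t,·))(x) (note that f(r,·) ∈ C₀(ℝ^d) for every r). Then (T(t))_{t≥0} is a Feller semigroup on C₀(ℝ × ℝ^d): each T(t) is a linear map of C₀(ℝ × ℝ^d) into itself, T(t)f ≥ 0 whenever f ≥ 0, ‖T(t)f‖_∞ ≤ ‖f‖_∞, T(0) = id, T(t+r) = T(t)∘T(r) for all t,r ≥ 0, and lim_{t↓0} ‖T(t)f − f‖_∞ = 0 for every f ∈ C₀(ℝ × ℝ^d). -/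
open Filter Topology
open scoped ZeroAtInfty BoundedContinuousFunction

/-- `U` is a Feller evolution system on `C₀(ℝ^d)`: each `U(s,t)` (for `s ≤ t`) is a
positivity-preserving linear contraction of `C₀(ℝ^d)` into itself, `U(s,s) = id`,
`U(s,t) = U(s,r) ∘ U(r,t)` for `s ≤ r ≤ t`, and `(s,t) ↦ U(s,t)f` is jointly strongly
continuous on `{(s,t) : s ≤ t}`. -/
def IsFellerEvolution {d : ℕ}
    (U : ℝ → ℝ → (EuclideanSpace ℝ (Fin d) →C₀ ℝ) →ₗ[ℝ] (EuclideanSpace ℝ (Fin d) →C₀ ℝ)) :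
    Prop :=
  (∀ s t, s ≤ t → ∀ f, ‖U s t f‖ ≤ ‖f‖) ∧
  (∀ s t, s ≤ t → ∀ f, (∀ x, 0 ≤ f x) → ∀ x, 0 ≤ U s t f x) ∧
  (∀ s, U s s = LinearMap.id) ∧
  (∀ s r t, s ≤ r → r ≤ t → U s t = (U s r) ∘ₗ (U r t)) ∧
  (∀ (f : EuclideanSpace ℝ (Fin d) →C₀ ℝ) (v w : ℝ), v ≤ w →
    Tendsto (fun p : ℝ × ℝ => ‖U p.1 p.2 f - U v w f‖)
      (𝓝[{p : ℝ × ℝ | p.1 ≤ p.2}] (v, w)) (𝓝 0))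

/-- The time slice `f(r,·)` of `f ∈ C₀(ℝ × ℝ^d)`, as an element of `C₀(ℝ^d)`. -/
noncomputable def timeSlice {d : ℕ} (f : (ℝ × EuclideanSpace ℝ (Fin d)) →C₀ ℝ) (r : ℝ) :
    EuclideanSpace ℝ (Fin d) →C₀ ℝ where
  toFun x := f (r, x)
  continuous_toFun := f.continuous.comp (Continuous.prodMk_right r)
  zero_at_infty' := by
    have h : IsClosedEmbedding (fun x : EuclideanSpace ℝ (Fin d) =>
        ((r, x) : ℝ × EuclideanSpace ℝ (Fin d))) := by
      refine ⟨isEmbedding_prodMkRight r, ?_⟩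
      have hr : Set.range (fun x : EuclideanSpace ℝ (Fin d) =>
          ((r, x) : ℝ × EuclideanSpace ℝ (Fin d))) = {r} ×ˢ Set.univ := by
        ext p; simp [Set.mem_prod, eq_comm, Prod.ext_iff]
      rw [hr]
      exact isClosed_singleton.prod isClosed_univ
    exact f.zero_at_infty'.comp h.tendsto_cocompact


lemma abs_apply_le_norm {α : Type*} [TopologicalSpace α] (g : α →C₀ ℝ) (x : α) :
    |g x| ≤ ‖g‖ := by
  simpa [Real.norm_eq_abs] using g.toBCF.norm_coe_le_norm x

lemma norm_le_of_forall' {α : Type*} [TopologicalSpace α] (g : α →C₀ ℝ) {C : ℝ} (hC : 0 ≤ C)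
    (h : ∀ x, |g x| ≤ C) : ‖g‖ ≤ C := by
  rw [← ZeroAtInftyContinuousMap.norm_toBCF_eq_norm]
  exact (BoundedContinuousFunction.norm_le hC).2 (by simpa [Real.norm_eq_abs] using h)

lemma timeSlice_apply (f : (ℝ × EuclideanSpace ℝ (Fin d)) →C₀ ℝ) (r : ℝ)
    (x : EuclideanSpace ℝ (Fin d)) : timeSlice f r x = f (r, x) := rfl

lemma timeSlice_uniform (f : (ℝ × EuclideanSpace ℝ (Fin d)) →C₀ ℝ) {ε : ℝ} (hε : 0 < ε) :
    ∃ δ > 0, ∀ r r', |r - r'| < δ → ‖timeSlice f r - timeSlice f r'‖ ≤ ε := by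
  obtain ⟨δ, hδ, h⟩ := Metric.uniformContinuous_iff.1 (ZeroAtInftyContinuousMap.uniformContinuous f) ε hε
  refine ⟨δ, hδ, fun r r' hrr' => ?_⟩
  refine norm_le_of_forall' _ hε.le fun x => ?_
  have := h (a := (r, x)) (b := (r', x)) (by simp [Prod.dist_eq, Real.dist_eq, hrr'])
  simpa [Real.dist_eq, timeSlice_apply] using this.le

lemma continuous_timeSlice (f : (ℝ × EuclideanSpace ℝ (Fin d)) →C₀ ℝ) :
    Continuous (timeSlice f) := by
  rw [Metric.continuous_iff]
  intro r ε hε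
  obtain ⟨δ, hδ, h⟩ := timeSlice_uniform f (half_pos hε)
  exact ⟨δ, hδ, fun r' hr' => by
    rw [dist_eq_norm]
    exact lt_of_le_of_lt (h r' r (by rwa [Real.dist_eq] at hr')) (half_lt_self hε)⟩
lemma timeSlice_vanish (f : (ℝ × EuclideanSpace ℝ (Fin d)) →C₀ ℝ) {ε : ℝ} (hε : 0 < ε) :
    ∃ M > 0, ∀ r, M ≤ |r| → ‖timeSlice f r‖ ≤ ε := by
  have h0 := zero_at_infty f
  have hmem : {y : ℝ | |y| ≤ ε} ∈ 𝓝 (0:ℝ) := by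
    have : Metric.closedBall (0:ℝ) ε ∈ 𝓝 (0:ℝ) := Metric.closedBall_mem_nhds _ hε
    simpa [Metric.closedBall, Real.dist_eq] using this
  obtain ⟨K, hK, hKs⟩ := Filter.mem_cocompact.1 (h0 hmem)
  obtain ⟨M0, hM0⟩ := (Metric.isBounded_iff_subset_closedBall 0).1 (hK.image continuous_fst).isBounded
  refine ⟨max M0 0 + 1, by positivity, fun r hr => ?_⟩
  refine norm_le_of_forall' _ hε.le fun x => ?_
  have hnot : (r, x) ∉ K := by
    intro hmem'
    have : r ∈ Metric.closedBall (0:ℝ) M0 := hM0 ⟨(r, x), hmem', rfl⟩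
    rw [Metric.mem_closedBall, Real.dist_eq, sub_zero] at this
    have : |r| ≤ max M0 0 := le_trans this (le_max_left _ _)
    linarith [hr]
  exact hKs hnot

lemma compact_uniform_vanish {K : Set (EuclideanSpace ℝ (Fin d) →C₀ ℝ)} (hK : IsCompact K)
    {ε : ℝ} (hε : 0 < ε) :
    ∃ L : Set (EuclideanSpace ℝ (Fin d)), IsCompact L ∧ ∀ g ∈ K, ∀ x ∉ L, |g x| ≤ ε := by
  obtain ⟨T, hTfin, hTcov⟩ := Metric.totallyBounded_iff.1 hK.totallyBounded (ε/2) (by positivity)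
  have hex : ∀ h : EuclideanSpace ℝ (Fin d) →C₀ ℝ, ∃ L : Set (EuclideanSpace ℝ (Fin d)),
      IsCompact L ∧ ∀ x ∉ L, |h x| ≤ ε/2 := by
    intro h
    have hmem : {y : ℝ | |y| ≤ ε/2} ∈ 𝓝 (0:ℝ) := by
      have : Metric.closedBall (0:ℝ) (ε/2) ∈ 𝓝 (0:ℝ) := Metric.closedBall_mem_nhds _ (by positivity)
      simpa [Metric.closedBall, Real.dist_eq] using this
    obtain ⟨L, hL, hLs⟩ := Filter.mem_cocompact.1 (zero_at_infty h hmem)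
    exact ⟨L, hL, fun x hx => hLs hx⟩
  choose ℓ hℓc hℓb using hex
  refine ⟨⋃ h ∈ T, ℓ h, hTfin.isCompact_biUnion fun h _ => hℓc h, fun g hg x hx => ?_⟩
  obtain ⟨h, hhT, hgh⟩ := Set.mem_iUnion₂.1 (hTcov hg)
  have hxh : x ∉ ℓ h := fun hxh => hx (Set.mem_biUnion hhT hxh)
  have h1 : |g x - h x| ≤ dist g h := by
    have := BoundedContinuousFunction.dist_coe_le_dist (f := g.toBCF) (g := h.toBCF) x
    rw [ZeroAtInftyContinuousMap.dist_toBCF_eq_dist] at this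
    simpa [Real.dist_eq] using this
  have h2 := hℓb h x hxh
  have h3 : dist g h < ε/2 := hgh
  calc |g x| ≤ |g x - h x| + |h x| := by
        simpa using abs_add_le (g x - h x) (h x)
    _ ≤ ε := by linarith

set_option maxHeartbeats 1000000 in
set_option synthInstance.maxHeartbeats 400000 in
lemma continuousOn_Phi {d : ℕ}
    {U : ℝ → ℝ → (EuclideanSpace ℝ (Fin d) →C₀ ℝ) →ₗ[ℝ] (EuclideanSpace ℝ (Fin d) →C₀ ℝ)}
    (hU : IsFellerEvolution U) :
    ContinuousOn (fun q : (ℝ × ℝ) × (EuclideanSpace ℝ (Fin d) →C₀ ℝ) => U q.1.1 q.1.2 q.2)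
      ({p : ℝ × ℝ | p.1 ≤ p.2} ×ˢ Set.univ) := by
  rintro ⟨⟨v, w⟩, g₀⟩ hq₀
  have hvw : v ≤ w := hq₀.1
  rw [ContinuousWithinAt, tendsto_iff_norm_sub_tendsto_zero]
  refine squeeze_zero'
    (g := fun q : (ℝ × ℝ) × (EuclideanSpace ℝ (Fin d) →C₀ ℝ) =>
      ‖q.2 - g₀‖ + ‖U q.1.1 q.1.2 g₀ - U v w g₀‖)
    (Filter.Eventually.of_forall fun q => norm_nonneg _) ?_ ?_
  · refine eventually_nhdsWithin_of_forall ?_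
    rintro ⟨⟨s, r⟩, g⟩ hq
    show ‖U s r g - U v w g₀‖ ≤ ‖g - g₀‖ + ‖U s r g₀ - U v w g₀‖
    have : U s r g - U v w g₀ = U s r (g - g₀) + (U s r g₀ - U v w g₀) := by
      rw [map_sub]; abel
    rw [this]
    exact (norm_add_le _ _).trans (add_le_add (hU.1 s r hq.1 _) le_rfl)
  · have h1 : Filter.Tendsto
        (fun q : (ℝ × ℝ) × (EuclideanSpace ℝ (Fin d) →C₀ ℝ) => ‖q.2 - g₀‖)
        (𝓝[{p : ℝ × ℝ | p.1 ≤ p.2} ×ˢ Set.univ] ((v, w), g₀)) (𝓝 0) := by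
      have : Filter.Tendsto
          (fun q : (ℝ × ℝ) × (EuclideanSpace ℝ (Fin d) →C₀ ℝ) => ‖q.2 - g₀‖)
          (𝓝 ((v, w), g₀)) (𝓝 0) := by
        have hc0 : Continuous fun q : (ℝ × ℝ) × (EuclideanSpace ℝ (Fin d) →C₀ ℝ) =>
            q.2 - g₀ := continuous_snd.sub continuous_const
        have hc : Continuous fun q : (ℝ × ℝ) × (EuclideanSpace ℝ (Fin d) →C₀ ℝ) =>
            ‖q.2 - g₀‖ := hc0.norm
        have := hc.tendsto ((v, w), g₀)
        simpa using this
      exact this.mono_left nhdsWithin_le_nhds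
    have h2 : Filter.Tendsto
        (fun q : (ℝ × ℝ) × (EuclideanSpace ℝ (Fin d) →C₀ ℝ) => ‖U q.1.1 q.1.2 g₀ - U v w g₀‖)
        (𝓝[{p : ℝ × ℝ | p.1 ≤ p.2} ×ˢ Set.univ] ((v, w), g₀)) (𝓝 0) := by
      refine (hU.2.2.2.2 g₀ v w hvw).comp ?_
      rw [tendsto_nhdsWithin_iff]
      exact ⟨continuous_fst.continuousWithinAt, eventually_nhdsWithin_of_forall fun q hq => hq.1⟩
    simpa using h1.add h2

/-- The space-time semigroup `T(t)f(s,x) := (U(s,s+t) f(s+t,·))(x)`, as a plain function on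
`ℝ × ℝ^d`. -/
noncomputable def spaceTime {d : ℕ}
    (U : ℝ → ℝ → (EuclideanSpace ℝ (Fin d) →C₀ ℝ) →ₗ[ℝ] (EuclideanSpace ℝ (Fin d) →C₀ ℝ))
    (t : ℝ) (f : (ℝ × EuclideanSpace ℝ (Fin d)) →C₀ ℝ) :
    ℝ × EuclideanSpace ℝ (Fin d) → ℝ :=
  fun p => U p.1 (p.1 + t) (timeSlice f (p.1 + t)) p.2

set_option maxHeartbeats 1000000 in
set_option synthInstance.maxHeartbeats 400000 in
lemma continuous_G {d : ℕ}
    {U : ℝ → ℝ → (EuclideanSpace ℝ (Fin d) →C₀ ℝ) →ₗ[ℝ] (EuclideanSpace ℝ (Fin d) →C₀ ℝ)}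
    (hU : IsFellerEvolution U) {t : ℝ} (ht : 0 ≤ t) (f : (ℝ × EuclideanSpace ℝ (Fin d)) →C₀ ℝ) :
    Continuous fun s : ℝ => U s (s + t) (timeSlice f (s + t)) := by
  have he : Continuous fun s : ℝ => (((s, s + t) : ℝ × ℝ), timeSlice f (s + t)) := by
    refine Continuous.prodMk ?_ ?_
    · exact continuous_id.prodMk (continuous_id.add continuous_const)
    · exact (continuous_timeSlice f).comp (continuous_id.add continuous_const)
  exact (continuousOn_Phi hU).comp_continuous he
    fun s => ⟨le_add_of_nonneg_right ht, Set.mem_univ _⟩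

lemma norm_G_le {d : ℕ}
    {U : ℝ → ℝ → (EuclideanSpace ℝ (Fin d) →C₀ ℝ) →ₗ[ℝ] (EuclideanSpace ℝ (Fin d) →C₀ ℝ)}
    (hU : IsFellerEvolution U) {t : ℝ} (ht : 0 ≤ t) (f : (ℝ × EuclideanSpace ℝ (Fin d)) →C₀ ℝ)
    (s : ℝ) : ‖U s (s + t) (timeSlice f (s + t))‖ ≤ ‖timeSlice f (s + t)‖ :=
  hU.1 s (s + t) (le_add_of_nonneg_right ht) _
set_option maxHeartbeats 1000000 in
set_option synthInstance.maxHeartbeats 400000 in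
lemma exists_C0 {d : ℕ}
    {U : ℝ → ℝ → (EuclideanSpace ℝ (Fin d) →C₀ ℝ) →ₗ[ℝ] (EuclideanSpace ℝ (Fin d) →C₀ ℝ)}
    (hU : IsFellerEvolution U) {t : ℝ} (ht : 0 ≤ t) (f : (ℝ × EuclideanSpace ℝ (Fin d)) →C₀ ℝ) :
    ∃ g : (ℝ × EuclideanSpace ℝ (Fin d)) →C₀ ℝ, ∀ p, g p = spaceTime U t f p := by
  set G : ℝ → (EuclideanSpace ℝ (Fin d) →C₀ ℝ) :=
    fun s => U s (s + t) (timeSlice f (s + t)) with hG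
  have hGc : Continuous G := continuous_G hU ht f
  have hcont : Continuous fun p : ℝ × EuclideanSpace ℝ (Fin d) => G p.1 p.2 := by
    have h1 : Continuous fun p : ℝ × EuclideanSpace ℝ (Fin d) =>
        (((G p.1).toBCF, p.2) : (EuclideanSpace ℝ (Fin d) →ᵇ ℝ) × EuclideanSpace ℝ (Fin d)) :=
      ((ZeroAtInftyContinuousMap.isometry_toBCF.continuous.comp hGc).comp
        continuous_fst).prodMk continuous_snd
    exact continuous_eval.comp h1
  have hzero : Filter.Tendsto (fun p : ℝ × EuclideanSpace ℝ (Fin d) => G p.1 p.2)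
      (Filter.cocompact (ℝ × EuclideanSpace ℝ (Fin d))) (𝓝 0) := by
    rw [Metric.tendsto_nhds]
    intro ε hε
    obtain ⟨M, hM, hMv⟩ := timeSlice_vanish f (half_pos hε)
    set M' : ℝ := M + t with hM'
    have hGnorm : ∀ s : ℝ, M' ≤ |s| → ‖G s‖ ≤ ε / 2 := by
      intro s hs
      refine (norm_G_le hU ht f s).trans (hMv (s + t) ?_)
      have h1 : |s| - t ≤ |s + t| := by
        have := abs_sub_abs_le_abs_sub s (-t)
        simp only [sub_neg_eq_add, abs_neg] at this
        calc |s| - t ≤ |s| - |t| := by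
              have : |t| = t := abs_of_nonneg ht
              linarith
          _ ≤ |s + t| := this
      linarith
    obtain ⟨L, hLc, hLb⟩ := compact_uniform_vanish
      ((isCompact_Icc (a := -M') (b := M')).image hGc) (half_pos hε)
    rw [Filter.eventually_iff, Filter.mem_cocompact]
    refine ⟨Set.Icc (-M') M' ×ˢ L, (isCompact_Icc).prod hLc, fun p hp => ?_⟩
    simp only [Set.mem_compl_iff, Set.mem_prod, not_and_or] at hp
    have hM'pos : 0 < M' := by simp only [hM']; linarith
    have hbound : |G p.1 p.2| ≤ ε / 2 := by
      by_cases hp1 : p.1 ∈ Set.Icc (-M') M'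
      · have hp2 : p.2 ∉ L := by
          rcases hp with hp | hp
          · exact absurd hp1 hp
          · exact hp
        exact hLb (G p.1) ⟨p.1, hp1, rfl⟩ p.2 hp2
      · have hout : M' ≤ |p.1| := by
          rw [Set.mem_Icc] at hp1; push_neg at hp1
          rcases lt_or_ge p.1 (-M') with h | h
          · rw [abs_of_nonpos (by linarith)]; linarith
          · exact (hp1 h).le.trans (le_abs_self _)
        exact (abs_apply_le_norm _ _).trans (hGnorm p.1 hout)
    simp only [Set.mem_setOf_eq, Real.dist_eq, sub_zero]
    exact lt_of_le_of_lt hbound (half_lt_self hε)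
  exact ⟨⟨⟨fun p => G p.1 p.2, hcont⟩, hzero⟩, fun p => rfl⟩
set_option maxHeartbeats 1000000 in
set_option synthInstance.maxHeartbeats 400000 in
/-- If `U` is a Feller evolution system on `C₀(ℝ^d)`, then the space-time
operators `T(t)f(s,x) = (U(s,s+t)f(s+t,·))(x)` form a Feller semigroup on `C₀(ℝ × ℝ^d)`:
each `T(t)` is a positivity-preserving linear contraction mapping `C₀(ℝ × ℝ^d)` into
itself, `T(0) = id`, `T(t+r) = T(t) ∘ T(r)`, and `t ↦ T(t)` is strongly continuous at `0`. -/
theorem spaceTime_isFellerSemigroup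
    (d : ℕ) (hd : 1 ≤ d)
    (U : ℝ → ℝ → (EuclideanSpace ℝ (Fin d) →C₀ ℝ) →ₗ[ℝ] (EuclideanSpace ℝ (Fin d) →C₀ ℝ))
    (hU : IsFellerEvolution U) :
    -- T(t) maps C₀(ℝ × ℝ^d) into itself
    (∀ t, 0 ≤ t → ∀ f : (ℝ × EuclideanSpace ℝ (Fin d)) →C₀ ℝ,
      ∃ g : (ℝ × EuclideanSpace ℝ (Fin d)) →C₀ ℝ, ∀ p, g p = spaceTime U t f p) ∧
    -- T(t) is linear
    (∀ t, 0 ≤ t → ∀ f g : (ℝ × EuclideanSpace ℝ (Fin d)) →C₀ ℝ, ∀ p,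
      spaceTime U t (f + g) p = spaceTime U t f p + spaceTime U t g p) ∧
    (∀ t, 0 ≤ t → ∀ (c : ℝ) (f : (ℝ × EuclideanSpace ℝ (Fin d)) →C₀ ℝ), ∀ p,
      spaceTime U t (c • f) p = c * spaceTime U t f p) ∧
    -- T(t) is positivity preserving
    (∀ t, 0 ≤ t → ∀ f : (ℝ × EuclideanSpace ℝ (Fin d)) →C₀ ℝ,
      (∀ p, 0 ≤ f p) → ∀ p, 0 ≤ spaceTime U t f p) ∧
    -- T(t) is a sup-norm contraction
    (∀ t, 0 ≤ t → ∀ f : (ℝ × EuclideanSpace ℝ (Fin d)) →C₀ ℝ, ∀ p,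
      |spaceTime U t f p| ≤ ‖f‖) ∧
    -- T(0) = id
    (∀ f : (ℝ × EuclideanSpace ℝ (Fin d)) →C₀ ℝ, ∀ p, spaceTime U 0 f p = f p) ∧
    -- semigroup property T(t+r) = T(t) ∘ T(r)
    (∀ t r, 0 ≤ t → 0 ≤ r → ∀ f g : (ℝ × EuclideanSpace ℝ (Fin d)) →C₀ ℝ,
      (∀ p, g p = spaceTime U r f p) → ∀ p, spaceTime U (t + r) f p = spaceTime U t g p) ∧
    -- strong continuity at t = 0
    (∀ f : (ℝ × EuclideanSpace ℝ (Fin d)) →C₀ ℝ, ∀ ε > (0:ℝ), ∃ δ > (0:ℝ),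
      ∀ t, 0 < t → t < δ → ∀ p, |spaceTime U t f p - f p| ≤ ε) := by
  refine ⟨fun t ht f => exists_C0 hU ht f, ?_, ?_, ?_, ?_, ?_, ?_, ?_⟩
  · -- additivity
    intro t ht f g p
    have hts : timeSlice (f + g) (p.1 + t) = timeSlice f (p.1 + t) + timeSlice g (p.1 + t) := by
      ext x; rfl
    show U p.1 (p.1 + t) (timeSlice (f + g) (p.1 + t)) p.2 = _
    rw [hts, map_add]
    rfl
  · -- homogeneity
    intro t ht c f p
    have hts : timeSlice (c • f) (p.1 + t) = c • timeSlice f (p.1 + t) := by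
      ext x; rfl
    show U p.1 (p.1 + t) (timeSlice (c • f) (p.1 + t)) p.2 = _
    rw [hts, map_smul]
    rfl
  · -- positivity
    intro t ht f hf p
    exact hU.2.1 p.1 (p.1 + t) (le_add_of_nonneg_right ht) _ (fun x => hf (p.1 + t, x)) p.2
  · -- contraction
    intro t ht f p
    calc |spaceTime U t f p| ≤ ‖U p.1 (p.1 + t) (timeSlice f (p.1 + t))‖ :=
          abs_apply_le_norm _ _
      _ ≤ ‖timeSlice f (p.1 + t)‖ := hU.1 _ _ (le_add_of_nonneg_right ht) _
      _ ≤ ‖f‖ := norm_le_of_forall' _ (norm_nonneg f) fun x => abs_apply_le_norm f _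
  · -- identity
    intro f p
    show U p.1 (p.1 + 0) (timeSlice f (p.1 + 0)) p.2 = f p
    rw [add_zero, hU.2.2.1 p.1]
    show timeSlice f p.1 p.2 = f p
    rw [timeSlice_apply]
  · -- semigroup
    intro t r ht hr f g hg p
    have hg' : timeSlice g (p.1 + t) =
        U (p.1 + t) ((p.1 + t) + r) (timeSlice f ((p.1 + t) + r)) := by
      ext x
      rw [timeSlice_apply, hg ((p.1 + t), x)]
      rfl
    show U p.1 (p.1 + (t + r)) (timeSlice f (p.1 + (t + r))) p.2 =
      U p.1 (p.1 + t) (timeSlice g (p.1 + t)) p.2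
    rw [hg', ← add_assoc,
      hU.2.2.2.1 p.1 (p.1 + t) ((p.1 + t) + r) (le_add_of_nonneg_right ht)
        (le_add_of_nonneg_right hr)]
    rfl
  · -- strong continuity at 0
    intro f ε hε
    obtain ⟨δ₁, hδ₁, hA⟩ := timeSlice_uniform f (show (0:ℝ) < ε/3 by linarith)
    obtain ⟨M, hM, hMv⟩ := timeSlice_vanish f (show (0:ℝ) < ε/6 by linarith)
    have hSclosed : IsClosed {p : ℝ × ℝ | p.1 ≤ p.2} := isClosed_le continuous_fst continuous_snd
    have hKc : IsCompact (timeSlice f '' Set.Icc (-M) M) :=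
      isCompact_Icc.image (continuous_timeSlice f)
    have hKcc : IsCompact ((((Set.Icc (-M) M ×ˢ Set.Icc (-M) (M+1)) ∩ {p : ℝ × ℝ | p.1 ≤ p.2})) ×ˢ
        (timeSlice f '' Set.Icc (-M) M)) :=
      ((isCompact_Icc.prod isCompact_Icc).inter_right hSclosed).prod hKc
    have hΦc : ContinuousOn
        (fun q : (ℝ × ℝ) × (EuclideanSpace ℝ (Fin d) →C₀ ℝ) => U q.1.1 q.1.2 q.2)
        ((((Set.Icc (-M) M ×ˢ Set.Icc (-M) (M+1)) ∩ {p : ℝ × ℝ | p.1 ≤ p.2})) ×ˢ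
          (timeSlice f '' Set.Icc (-M) M)) := by
      refine (continuousOn_Phi hU).mono ?_
      rintro ⟨q1, q2⟩ ⟨hq1, _⟩
      exact ⟨hq1.2, Set.mem_univ _⟩
    have hUC := hKcc.uniformContinuousOn_of_continuous hΦc
    rw [Metric.uniformContinuousOn_iff] at hUC
    obtain ⟨δ₂, hδ₂, hB⟩ := hUC (ε/3) (by linarith)
    refine ⟨min δ₁ (min δ₂ 1), by positivity, fun t ht htδ p => ?_⟩
    have ht1 : t < δ₁ := lt_of_lt_of_le htδ (min_le_left _ _)
    have ht2 : t < δ₂ := lt_of_lt_of_le htδ ((min_le_right _ _).trans (min_le_left _ _))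
    have ht3 : t ≤ 1 := le_of_lt (lt_of_lt_of_le htδ ((min_le_right _ _).trans (min_le_right _ _)))
    set s := p.1 with hs
    have key : |spaceTime U t f p - f p| ≤
        ‖U s (s + t) (timeSlice f (s + t)) - timeSlice f s‖ := by
      have h1 : spaceTime U t f p - f p =
          (U s (s + t) (timeSlice f (s + t)) - timeSlice f s) p.2 := by
        simp only [ZeroAtInftyContinuousMap.coe_sub, Pi.sub_apply, timeSlice_apply]
        rfl
      rw [h1]
      exact abs_apply_le_norm _ _
    have tri : ‖U s (s + t) (timeSlice f (s + t)) - timeSlice f s‖ ≤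
        ‖timeSlice f (s + t) - timeSlice f s‖ +
        ‖U s (s + t) (timeSlice f s) - timeSlice f s‖ := by
      have hsplit : U s (s + t) (timeSlice f (s + t)) - timeSlice f s
          = U s (s + t) (timeSlice f (s + t) - timeSlice f s) +
            (U s (s + t) (timeSlice f s) - timeSlice f s) := by
        rw [map_sub]; abel
      rw [hsplit]
      exact (norm_add_le _ _).trans
        (add_le_add (hU.1 _ _ (le_add_of_nonneg_right ht.le) _) le_rfl)
    have hAt : ‖timeSlice f (s + t) - timeSlice f s‖ ≤ ε/3 := by
      refine hA (s + t) s ?_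
      rw [add_sub_cancel_left]
      rwa [abs_of_pos ht]
    have hBt : ‖U s (s + t) (timeSlice f s) - timeSlice f s‖ ≤ ε/3 := by
      by_cases hsM : s ∈ Set.Icc (-M) M
      · have hq : (((s, s + t), timeSlice f s) :
            (ℝ × ℝ) × (EuclideanSpace ℝ (Fin d) →C₀ ℝ)) ∈
            (((Set.Icc (-M) M ×ˢ Set.Icc (-M) (M+1)) ∩ {p : ℝ × ℝ | p.1 ≤ p.2})) ×ˢ
              (timeSlice f '' Set.Icc (-M) M) := by
          refine ⟨⟨⟨hsM, ⟨show -M ≤ s + t by linarith [hsM.1],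
            show s + t ≤ M + 1 by linarith [hsM.2]⟩⟩,
            show s ≤ s + t from le_add_of_nonneg_right ht.le⟩, ⟨s, hsM, rfl⟩⟩
        have hq' : (((s, s), timeSlice f s) :
            (ℝ × ℝ) × (EuclideanSpace ℝ (Fin d) →C₀ ℝ)) ∈
            (((Set.Icc (-M) M ×ˢ Set.Icc (-M) (M+1)) ∩ {p : ℝ × ℝ | p.1 ≤ p.2})) ×ˢ
              (timeSlice f '' Set.Icc (-M) M) := by
          refine ⟨⟨⟨hsM, ⟨show -M ≤ s from hsM.1,
            show s ≤ M + 1 by linarith [hsM.2]⟩⟩, show s ≤ s from le_refl s⟩, ⟨s, hsM, rfl⟩⟩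
        have hdist : dist (((s, s + t), timeSlice f s) :
            (ℝ × ℝ) × (EuclideanSpace ℝ (Fin d) →C₀ ℝ)) ((s, s), timeSlice f s) < δ₂ := by
          rw [Prod.dist_eq, Prod.dist_eq]
          simp only [dist_self, Real.dist_eq, add_sub_cancel_left, abs_of_pos ht]
          rw [max_eq_left (le_max_of_le_right ht.le), max_eq_right ht.le]
          exact ht2
        have hd := hB _ hq _ hq' hdist
        rw [dist_eq_norm] at hd
        have hUss : U s s (timeSlice f s) = timeSlice f s := by
          rw [hU.2.2.1 s]; rfl
        rw [hUss] at hd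
        exact hd.le
      · have hout : M ≤ |s| := by
          rw [Set.mem_Icc] at hsM; push_neg at hsM
          rcases lt_or_ge s (-M) with h | h
          · rw [abs_of_nonpos (by linarith)]; linarith
          · exact (hsM h).le.trans (le_abs_self _)
        have h1 : ‖timeSlice f s‖ ≤ ε/6 := hMv s hout
        have h2 : ‖U s (s + t) (timeSlice f s)‖ ≤ ε/6 :=
          (hU.1 _ _ (le_add_of_nonneg_right ht.le) _).trans h1
        calc ‖U s (s + t) (timeSlice f s) - timeSlice f s‖ ≤
            ‖U s (s + t) (timeSlice f s)‖ + ‖timeSlice f s‖ := norm_sub_le _ _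
          _ ≤ ε/3 := by linarith
    linarith [key.trans (tri.trans (add_le_add hAt hBt))]
end

section
/- Let d ≥ 1 and let (U(s,t))_{s≤t} be a Feller evolution system on C₀(ℝ^d). Then for every f ∈ C₀(ℝ × ℝ^d), lim_{t↓0} sup_{(s,x)∈ℝ×ℝ^d} |(U(s,s+t) f(s+t,·))(x) − f(s,x)| = 0; i.e., the space-time semigroup T(t)f(s,x) := (U(s,s+t)f(s+t,·))(x) is strongly continuous at t = 0 on C₀(ℝ × ℝ^d). -/
open Filter Topology
open scoped ZeroAtInfty

section helpers
variable {α : Type*} [TopologicalSpace α]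

lemma c0_abs_apply_le_norm (h : α →C₀ ℝ) (x : α) : |h x| ≤ ‖h‖ := by
  rw [← ZeroAtInftyContinuousMap.norm_toBCF_eq_norm, ← Real.norm_eq_abs]
  exact h.toBCF.norm_coe_le_norm x

lemma c0_norm_le_of_forall {h : α →C₀ ℝ} {C : ℝ} (hC : 0 ≤ C)
    (hx : ∀ x, |h x| ≤ C) : ‖h‖ ≤ C := by
  rw [← ZeroAtInftyContinuousMap.norm_toBCF_eq_norm]
  exact (BoundedContinuousFunction.norm_le hC).mpr fun x => by
    simpa [Real.norm_eq_abs] using hx x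
end helpers

/-- If `U` is a Feller evolution system on `C₀(ℝ^d)`, then the space-time
semigroup `T(t)f(s,x) = (U(s,s+t)f(s+t,·))(x)` is strongly continuous at `t = 0` on
`C₀(ℝ × ℝ^d)`: `sup_{(s,x)} |T(t)f(s,x) - f(s,x)| → 0` as `t ↓ 0`. -/
theorem spaceTime_strongly_continuous
    (d : ℕ) (hd : 1 ≤ d)
    (U : ℝ → ℝ → (EuclideanSpace ℝ (Fin d) →C₀ ℝ) →ₗ[ℝ] (EuclideanSpace ℝ (Fin d) →C₀ ℝ))
    (hU : IsFellerEvolution U)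
    (f : (ℝ × EuclideanSpace ℝ (Fin d)) →C₀ ℝ) :
    ∀ ε > (0:ℝ), ∃ δ > (0:ℝ), ∀ t, 0 < t → t < δ →
      ∀ p : ℝ × EuclideanSpace ℝ (Fin d), |spaceTime U t f p - f p| < ε := by
  intro ε hε
  obtain ⟨hcontr, -, hid, -, hcont⟩ := hU
  set g : ℝ → (EuclideanSpace ℝ (Fin d) →C₀ ℝ) := timeSlice f with hg
  -- Step A: uniform continuity in the time variable
  have hfu : UniformContinuous f := ZeroAtInftyContinuousMap.uniformContinuous f
  obtain ⟨δ₁, hδ₁, hA⟩ := Metric.uniformContinuous_iff.mp hfu (ε/8) (by positivity)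
  have hgdiff : ∀ s s' : ℝ, |s - s'| < δ₁ → ‖g s - g s'‖ ≤ ε/8 := by
    intro s s' h
    refine c0_norm_le_of_forall (by positivity) fun x => ?_
    have hd : dist ((s, x) : ℝ × EuclideanSpace ℝ (Fin d)) (s', x) < δ₁ := by
      simpa [Prod.dist_eq, Real.dist_eq] using h
    have := hA hd
    rw [Real.dist_eq] at this
    simpa [hg, timeSlice] using this.le
  -- Step B: vanishing at infinity in the time variable
  have hzero := f.zero_at_infty'
  rw [Metric.tendsto_nhds] at hzero
  have hev := hzero (ε/4) (by positivity)
  rw [Filter.eventually_iff, Filter.mem_cocompact] at hev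
  obtain ⟨K, hK, hKsub⟩ := hev
  obtain ⟨r, hr⟩ := (hK.image continuous_fst).isBounded.subset_closedBall 0
  set R : ℝ := max r 0 with hR
  have hgfar : ∀ s : ℝ, R < |s| → ‖g s‖ ≤ ε/4 := by
    intro s hs
    refine c0_norm_le_of_forall (by positivity) fun x => ?_
    have hnot : ((s, x) : ℝ × EuclideanSpace ℝ (Fin d)) ∉ K := by
      intro hmem
      have : s ∈ Metric.closedBall (0:ℝ) r := hr ⟨(s, x), hmem, rfl⟩
      rw [Metric.mem_closedBall, Real.dist_eq, sub_zero] at this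
      exact absurd (this.trans (le_max_left r 0)) (not_le.mpr hs)
    have := hKsub hnot
    simp only [Set.mem_setOf_eq, dist_zero_right, Real.norm_eq_abs] at this
    simpa [hg, timeSlice] using this.le
  -- Step C: joint strong continuity at each point on the diagonal
  have hC : ∀ s₀ : ℝ, ∃ η > (0:ℝ), η ≤ δ₁ ∧ ∀ p : ℝ × ℝ, p.1 ≤ p.2 →
      dist p (s₀, s₀) < η → ‖U p.1 p.2 (g s₀) - g s₀‖ < ε/4 := by
    intro s₀
    have h := hcont (g s₀) s₀ s₀ le_rfl
    rw [Metric.tendsto_nhdsWithin_nhds] at h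
    obtain ⟨η, hη, hh⟩ := h (ε/4) (by positivity)
    refine ⟨min η δ₁, lt_min hη hδ₁, min_le_right _ _, fun p hp hdist => ?_⟩
    have h2 := hh hp (lt_of_lt_of_le hdist (min_le_left _ _))
    rw [hid s₀] at h2
    rw [Real.dist_eq, sub_zero, abs_of_nonneg (norm_nonneg _)] at h2
    simpa using h2
  choose η hηpos hηδ₁ hηspec using hC
  -- Step D: compactness
  have hcov : Set.Icc (-(R+1)) (R+1) ⊆ ⋃ s₀ ∈ Set.univ (α := ℝ), Metric.ball s₀ (η s₀ / 2) := by
    intro s _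
    exact Set.mem_biUnion (Set.mem_univ s) (Metric.mem_ball_self (by linarith [hηpos s]))
  have hRnn : (0:ℝ) ≤ R := le_max_right r 0
  obtain ⟨F, hF⟩ := (isCompact_Icc (a := -(R+1)) (b := R+1)).elim_finite_subcover
    (fun s₀ : ℝ => Metric.ball s₀ (η s₀ / 2)) (fun s₀ => Metric.isOpen_ball)
    (by intro s hs; exact Set.mem_iUnion.mpr ⟨s, Metric.mem_ball_self (by linarith [hηpos s])⟩)
  -- define δ
  have hFne : F.Nonempty := by
    have h0 : (0:ℝ) ∈ Set.Icc (-(R+1)) (R+1) := by constructor <;> linarith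
    obtain ⟨i, hi⟩ := Set.mem_iUnion.mp (hF h0)
    obtain ⟨hiF, -⟩ := Set.mem_iUnion.mp hi
    exact ⟨i, hiF⟩
  set δ : ℝ := min (min 1 δ₁) (F.inf' hFne fun i => η i / 2) with hδdef
  have hδpos : 0 < δ := by
    refine lt_min (lt_min one_pos hδ₁) ?_
    rw [Finset.lt_inf'_iff]
    intro i _
    linarith [hηpos i]
  refine ⟨δ, hδpos, fun t ht htδ p => ?_⟩
  obtain ⟨s, x⟩ := p
  have hst : s ≤ s + t := by linarith
  have htδ₁ : t < δ₁ := lt_of_lt_of_le htδ ((min_le_left _ _).trans (min_le_right _ _))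
  have ht1 : t < 1 := lt_of_lt_of_le htδ ((min_le_left _ _).trans (min_le_left _ _))
  -- pointwise bound by the operator-norm bound
  have hkey : |spaceTime U t f (s, x) - f (s, x)| ≤ ‖U s (s+t) (g (s+t)) - g s‖ := by
    have : spaceTime U t f (s, x) - f (s, x) = (U s (s+t) (g (s+t)) - g s) x := by
      simp [spaceTime, hg, timeSlice]
    rw [this]
    exact c0_abs_apply_le_norm _ x
  refine lt_of_le_of_lt hkey ?_
  by_cases hsK : s ∈ Set.Icc (-(R+1)) (R+1)
  · -- compact case
    obtain ⟨i, hi⟩ := Set.mem_iUnion.mp (hF hsK)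
    obtain ⟨hiF, hib⟩ := Set.mem_iUnion.mp hi
    have hsi : |s - i| < η i / 2 := by
      rw [Metric.mem_ball, Real.dist_eq] at hib; exact hib
    have htη : t < η i / 2 :=
      lt_of_lt_of_le htδ ((min_le_right _ _).trans (Finset.inf'_le _ hiF))
    have hdist : dist ((s, s+t) : ℝ × ℝ) (i, i) < η i := by
      rw [Prod.dist_eq]
      apply max_lt
      · rw [Real.dist_eq]; linarith [hηpos i]
      · rw [Real.dist_eq]
        have : |s + t - i| ≤ |s - i| + t := by
          have := abs_add_le (s - i) t
          simpa [add_sub_right_comm, abs_of_pos ht] using this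
        linarith
    have hUi : ‖U s (s+t) (g i) - g i‖ < ε/4 :=
      hηspec i (s, s+t) hst hdist
    have hsi1 : ‖g s - g i‖ ≤ ε/8 := hgdiff s i (hsi.trans_le (by linarith [hηδ₁ i]))
    have hst1 : ‖g (s+t) - g s‖ ≤ ε/8 := hgdiff (s+t) s (by simpa [abs_of_pos ht] using htδ₁)
    have hcontr1 : ‖U s (s+t) (g (s+t) - g i)‖ ≤ ‖g (s+t) - g i‖ := hcontr s (s+t) hst _
    have htri : ‖U s (s+t) (g (s+t)) - g s‖ ≤
        ‖U s (s+t) (g (s+t) - g i)‖ + ‖U s (s+t) (g i) - g i‖ + ‖g i - g s‖ := by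
      have e : U s (s+t) (g (s+t)) - g s =
          U s (s+t) (g (s+t) - g i) + (U s (s+t) (g i) - g i) + (g i - g s) := by
        rw [map_sub]; abel
      rw [e]
      exact (norm_add_le _ _).trans (by gcongr; exact norm_add_le _ _)
    have hgi : ‖g (s+t) - g i‖ ≤ ε/8 + ε/8 := by
      calc ‖g (s+t) - g i‖ ≤ ‖g (s+t) - g s‖ + ‖g s - g i‖ := norm_sub_le_norm_sub_add_norm_sub _ _ _
        _ ≤ ε/8 + ε/8 := add_le_add hst1 hsi1
    have hgis : ‖g i - g s‖ ≤ ε/8 := by rw [norm_sub_rev]; exact hsi1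
    linarith
  · -- far case
    rw [Set.mem_Icc, not_and_or, not_le, not_le] at hsK
    have h1 : ‖g s‖ ≤ ε/4 := by
      apply hgfar
      rcases hsK with h | h
      · rw [abs_of_neg (by linarith)]; linarith
      · rw [abs_of_pos (by linarith)]; linarith
    have h2 : ‖g (s+t)‖ ≤ ε/4 := by
      apply hgfar
      rcases hsK with h | h
      · rw [abs_of_neg (by linarith)]; linarith
      · rw [abs_of_pos (by linarith)]; linarith
    have h3 : ‖U s (s+t) (g (s+t))‖ ≤ ε/4 := (hcontr s (s+t) hst _).trans h2
    calc ‖U s (s+t) (g (s+t)) - g s‖ ≤ ‖U s (s+t) (g (s+t))‖ + ‖g s‖ := norm_sub_le _ _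
      _ ≤ ε/4 + ε/4 := add_le_add h3 h1
      _ < ε := by linarith
end

section
/- Let d ≥ 1 and let (U(s,t))_{s,t∈ℝ, s≤t} be linear operators on the space of bounded real-valued functions on ℝ^d that are positivity preserving (f ≥ 0 implies U(s,t)f ≥ 0), sup-norm contractions (‖U(s,t)f‖_∞ ≤ ‖f‖_∞), and satisfy U(s,s) = id and U(s,t) = U(s,r)∘U(r,t) for s ≤ r ≤ t. Define T(t)f(s,x) := (U(s,s+t) f(s+t,·))(x) for bounded f : ℝ × ℝ^d → ℝ. Suppose that for every t ≥ 0, T(t) maps C₀(ℝ × ℝ^d) into itself and that lim_{t↓0} ‖T(t)f − f‖_∞ = 0 for every f ∈ C₀(ℝ × ℝ^d). Then (U(s,t)) restricted to C₀(ℝ^d) is a Feller evolution system; in particular, U(s,t) maps C₀(ℝ^d) into C₀(ℝ^d) and for every g ∈ C₀(ℝ^d) and every v ≤ w one has ‖U(s,t)g − U(v,w)g‖_∞ → 0 as (s,t) → (v,w) with s ≤ t. -/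
open Filter Topology
open scoped ZeroAtInfty

/-- A function is bounded if `|f y| ≤ M` for some `M`. -/
def IsBdd {α : Type*} (f : α → ℝ) : Prop := ∃ M : ℝ, ∀ y, |f y| ≤ M

/-- The space-time operators `T(t)f(s,x) := (U(s,s+t) f(s+t,·))(x)` on plain functions. -/
noncomputable def spaceTimeOp (d : ℕ)
    (U : ℝ → ℝ → (EuclideanSpace ℝ (Fin d) → ℝ) →ₗ[ℝ] (EuclideanSpace ℝ (Fin d) → ℝ))
    (t : ℝ) (f : ℝ × EuclideanSpace ℝ (Fin d) → ℝ) :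
    ℝ × EuclideanSpace ℝ (Fin d) → ℝ :=
  fun p => U p.1 (p.1 + t) (fun y => f (p.1 + t, y)) p.2

/-- Bump function equal to `1` on `[c-1,c+1]` and vanishing outside `[c-2,c+2]`. -/
noncomputable def phiBump (c r : ℝ) : ℝ := max 0 (min 1 (2 - |r - c|))

lemma phiBump_continuous (c : ℝ) : Continuous (phiBump c) := by
  have h1 : Continuous fun r : ℝ => |r - c| := (continuous_id.sub continuous_const).abs
  exact continuous_const.max (continuous_const.min (continuous_const.sub h1))

lemma phiBump_nonneg (c r : ℝ) : 0 ≤ phiBump c r := le_max_left _ _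

lemma phiBump_le_one (c r : ℝ) : phiBump c r ≤ 1 :=
  max_le zero_le_one (min_le_left _ _)

lemma phiBump_eq_one {c r : ℝ} (h : |r - c| ≤ 1) : phiBump c r = 1 := by
  unfold phiBump
  rw [min_eq_left (by linarith), max_eq_right zero_le_one]

lemma phiBump_eq_zero {c r : ℝ} (h : 2 ≤ |r - c|) : phiBump c r = 0 := by
  unfold phiBump
  rw [min_eq_right (by linarith), max_eq_left (by linarith)]

lemma c0_isBdd {α : Type*} [TopologicalSpace α] (f : α →C₀ ℝ) : IsBdd ⇑f :=
  ⟨‖f.toBCF‖, fun y => by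
    simpa [Real.norm_eq_abs] using f.toBCF.norm_coe_le_norm y⟩

lemma c0_small {α : Type*} [TopologicalSpace α] (g : α →C₀ ℝ) {ε : ℝ} (hε : 0 < ε) :
    ∃ K : Set α, IsCompact K ∧ ∀ x ∉ K, |g x| < ε := by
  have h := zero_at_infty g
  rw [Filter.hasBasis_cocompact.tendsto_iff Metric.nhds_basis_ball] at h
  obtain ⟨K, hK, hK'⟩ := h ε hε
  exact ⟨K, hK, fun x hx => by
    simpa [Metric.mem_ball, Real.dist_eq] using hK' x hx⟩

lemma exists_tensor {E : Type*} [TopologicalSpace E] (c : ℝ) (g : E →C₀ ℝ) :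
    ∃ f : (ℝ × E) →C₀ ℝ, ∀ p : ℝ × E, f p = phiBump c p.1 * g p.2 := by
  refine ⟨⟨⟨fun p => phiBump c p.1 * g p.2, ?_⟩, ?_⟩, fun p => rfl⟩
  · exact ((phiBump_continuous c).comp continuous_fst).mul
      ((map_continuous g).comp continuous_snd)
  · rw [Filter.hasBasis_cocompact.tendsto_iff Metric.nhds_basis_ball]
    intro ε hε
    obtain ⟨K, hK, hKs⟩ := c0_small g hε
    refine ⟨Set.Icc (c - 2) (c + 2) ×ˢ K, isCompact_Icc.prod hK, fun p hp => ?_⟩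
    simp only [Metric.mem_ball, Real.dist_eq, sub_zero]
    rcases le_or_gt 2 |p.1 - c| with h | h
    · rw [phiBump_eq_zero h, zero_mul, abs_zero]; exact hε
    · have hp1 : p.1 ∈ Set.Icc (c - 2) (c + 2) := by
        obtain ⟨h1, h2⟩ := abs_lt.mp h
        constructor <;> linarith
      have hp2 : p.2 ∉ K := fun hk => hp (Set.mem_prod.mpr ⟨hp1, hk⟩)
      have hg := hKs p.2 hp2
      have h0 := phiBump_nonneg c p.1
      have h1 := phiBump_le_one c p.1
      rw [abs_mul, abs_of_nonneg h0]
      nlinarith [abs_nonneg (g p.2)]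

/-- Let `U(s,t)`, `s ≤ t`, be positivity-preserving sup-norm contractions
on the bounded functions on `ℝ^d` with `U(s,s) = id` and the evolution property. If the
space-time operators `T(t)` map `C₀(ℝ × ℝ^d)` into itself and are strongly continuous at
`t = 0`, then `U` restricted to `C₀(ℝ^d)` is a Feller evolution system: in particular
`U(s,t)` maps `C₀(ℝ^d)` into `C₀(ℝ^d)` and `(s,t) ↦ U(s,t)g` is jointly strongly
continuous on `{s ≤ t}`. -/
theorem feller_evolution_of_spaceTime_feller
    (d : ℕ) (hd : 1 ≤ d)
    (U : ℝ → ℝ → (EuclideanSpace ℝ (Fin d) → ℝ) →ₗ[ℝ] (EuclideanSpace ℝ (Fin d) → ℝ))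
    (hpos : ∀ s t, s ≤ t → ∀ g : EuclideanSpace ℝ (Fin d) → ℝ,
      (∀ x, 0 ≤ g x) → ∀ x, 0 ≤ U s t g x)
    (hcontr : ∀ s t, s ≤ t → ∀ (g : EuclideanSpace ℝ (Fin d) → ℝ) (M : ℝ),
      (∀ x, |g x| ≤ M) → ∀ x, |U s t g x| ≤ M)
    (hid : ∀ s, ∀ g : EuclideanSpace ℝ (Fin d) → ℝ, IsBdd g → U s s g = g)
    (hev : ∀ s r t, s ≤ r → r ≤ t → ∀ g : EuclideanSpace ℝ (Fin d) → ℝ, IsBdd g →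
      U s t g = U s r (U r t g))
    -- T(t) maps C₀(ℝ × ℝ^d) into itself
    (hTmaps : ∀ t, 0 ≤ t → ∀ f : (ℝ × EuclideanSpace ℝ (Fin d)) →C₀ ℝ,
      ∃ g : (ℝ × EuclideanSpace ℝ (Fin d)) →C₀ ℝ, ∀ p, g p = spaceTimeOp d U t (⇑f) p)
    -- T(t) is strongly continuous at 0 on C₀(ℝ × ℝ^d)
    (hTcont : ∀ f : (ℝ × EuclideanSpace ℝ (Fin d)) →C₀ ℝ, ∀ ε > (0:ℝ), ∃ δ > (0:ℝ),
      ∀ t, 0 < t → t < δ → ∀ p, |spaceTimeOp d U t (⇑f) p - f p| ≤ ε) :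
    -- U(s,t) maps C₀(ℝ^d) into itself
    (∀ s t, s ≤ t → ∀ g : EuclideanSpace ℝ (Fin d) →C₀ ℝ,
      ∃ g' : EuclideanSpace ℝ (Fin d) →C₀ ℝ, ∀ x, g' x = U s t (⇑g) x) ∧
    -- joint strong continuity of (s,t) ↦ U(s,t)g on {s ≤ t}
    (∀ g : EuclideanSpace ℝ (Fin d) →C₀ ℝ, ∀ v w : ℝ, v ≤ w → ∀ ε > (0:ℝ), ∃ δ > (0:ℝ),
      ∀ s t : ℝ, s ≤ t → |s - v| < δ → |t - w| < δ →
        ∀ x, |U s t (⇑g) x - U v w (⇑g) x| ≤ ε) := by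
  classical
  -- semigroup property of the space-time operators
  have hTsemi : ∀ (a b : ℝ), 0 ≤ a → 0 ≤ b → ∀ F : ℝ × EuclideanSpace ℝ (Fin d) → ℝ, IsBdd F →
      ∀ p, spaceTimeOp d U (a + b) F p = spaceTimeOp d U a (spaceTimeOp d U b F) p := by
    intro a b ha hb F hF p
    obtain ⟨M, hM⟩ := hF
    simp only [spaceTimeOp]
    rw [show p.1 + (a + b) = p.1 + a + b by ring,
      hev p.1 (p.1 + a) (p.1 + a + b) (by linarith) (by linarith)
        (fun y => F (p.1 + a + b, y)) ⟨M, fun z => hM _⟩]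
  -- strong continuity of τ ↦ T(τ)f, uniformly from strong continuity at 0
  have hAcont : ∀ f : (ℝ × EuclideanSpace ℝ (Fin d)) →C₀ ℝ, ∀ ε : ℝ, 0 < ε → ∃ δ > (0:ℝ),
      ∀ τ₀ τ : ℝ, 0 ≤ τ₀ → 0 ≤ τ → |τ - τ₀| < δ → ∀ p,
        |spaceTimeOp d U τ (⇑f) p - spaceTimeOp d U τ₀ (⇑f) p| ≤ ε := by
    intro f ε hε
    obtain ⟨δ, hδ0, hδ⟩ := hTcont f ε hε
    have one : ∀ τ₀ τ : ℝ, 0 ≤ τ₀ → τ₀ ≤ τ → τ - τ₀ < δ → ∀ p,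
        |spaceTimeOp d U τ (⇑f) p - spaceTimeOp d U τ₀ (⇑f) p| ≤ ε := by
      intro τ₀ τ h0 hle hlt p
      rcases eq_or_lt_of_le hle with rfl | hlt'
      · simpa using hε.le
      · have hpos' : 0 < τ - τ₀ := by linarith
        have hsg := hTsemi τ₀ (τ - τ₀) h0 hpos'.le (⇑f) (c0_isBdd f) p
        rw [show τ₀ + (τ - τ₀) = τ by ring] at hsg
        rw [hsg]
        have hsub : spaceTimeOp d U τ₀ (spaceTimeOp d U (τ - τ₀) (⇑f)) p
              - spaceTimeOp d U τ₀ (⇑f) p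
            = U p.1 (p.1 + τ₀) ((fun y => spaceTimeOp d U (τ - τ₀) (⇑f) (p.1 + τ₀, y))
              - fun y => f (p.1 + τ₀, y)) p.2 := by
          show U p.1 (p.1 + τ₀) (fun y => spaceTimeOp d U (τ - τ₀) (⇑f) (p.1 + τ₀, y)) p.2
              - U p.1 (p.1 + τ₀) (fun y => f (p.1 + τ₀, y)) p.2 = _
          rw [map_sub]; rfl
        rw [hsub]
        refine hcontr p.1 (p.1 + τ₀) (by linarith) _ ε ?_ p.2
        intro y
        have := hδ (τ - τ₀) hpos' hlt (p.1 + τ₀, y)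
        simpa [Pi.sub_apply] using this
    refine ⟨δ, hδ0, fun τ₀ τ h0 h0' hlt p => ?_⟩
    rcases le_total τ₀ τ with h | h
    · exact one τ₀ τ h0 h (by rw [abs_of_nonneg (by linarith)] at hlt; exact hlt) p
    · rw [abs_sub_comm]
      exact one τ τ₀ h0' h
        (by rw [abs_of_nonpos (by linarith), neg_sub] at hlt; exact hlt) p
  -- U(s,t)g = T(t-s)f(s,·) for the tensor f with bump centered so that it is 1 at t
  -- Part 1: U(s,t) maps C₀ into C₀
  have part1 : ∀ s t, s ≤ t → ∀ g : EuclideanSpace ℝ (Fin d) →C₀ ℝ,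
      ∃ g' : EuclideanSpace ℝ (Fin d) →C₀ ℝ, ∀ x, g' x = U s t (⇑g) x := by
    intro s t hst g
    obtain ⟨f, hf⟩ := exists_tensor t g
    obtain ⟨G, hG⟩ := hTmaps (t - s) (by linarith) f
    have hemb : Filter.Tendsto (fun x : EuclideanSpace ℝ (Fin d) => ((s, x) : ℝ × EuclideanSpace ℝ (Fin d)))
        (Filter.cocompact (EuclideanSpace ℝ (Fin d))) (Filter.cocompact (ℝ × EuclideanSpace ℝ (Fin d))) := by
      apply Topology.IsClosedEmbedding.tendsto_cocompact
      refine ⟨isEmbedding_prodMkRight s, ?_⟩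
      have : Set.range (Prod.mk s : EuclideanSpace ℝ (Fin d) → ℝ × EuclideanSpace ℝ (Fin d)) = Prod.fst ⁻¹' {s} := by
        ext p
        simp [Prod.ext_iff, eq_comm]
      rw [this]
      exact isClosed_singleton.preimage continuous_fst
    refine ⟨⟨⟨fun x => G (s, x), (map_continuous G).comp
      (continuous_const.prodMk continuous_id)⟩, (zero_at_infty G).comp hemb⟩, ?_⟩
    intro x
    show G (s, x) = U s t (⇑g) x
    rw [hG (s, x)]
    show U s (s + (t - s)) (fun y => f (s + (t - s), y)) x = U s t (⇑g) x
    rw [show s + (t - s) = t by ring]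
    have hslice : (fun y => f (t, y)) = ⇑g := by
      funext y
      rw [hf (t, y)]
      simp [phiBump_eq_one (show |t - t| ≤ 1 by simp)]
    rw [hslice]
  refine ⟨part1, ?_⟩
  -- Part 2: joint strong continuity
  intro g v w hvw ε hε
  obtain ⟨f, hf⟩ := exists_tensor w g
  obtain ⟨δ₁, hδ₁0, hδ₁⟩ := hAcont f (ε / 2) (half_pos hε)
  obtain ⟨G, hG⟩ := hTmaps (w - v) (by linarith) f
  obtain ⟨δ₂, hδ₂0, hδ₂⟩ := Metric.uniformContinuous_iff.mp
    (ZeroAtInftyContinuousMap.uniformContinuous G) (ε / 2) (half_pos hε)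
  refine ⟨min 1 (min δ₂ (δ₁ / 2)), by positivity, ?_⟩
  intro s t hst hsv htw x
  have hsv1 : |s - v| < δ₂ := lt_of_lt_of_le hsv (le_trans (min_le_right _ _) (min_le_left _ _))
  have hsv2 : |s - v| < δ₁ / 2 := lt_of_lt_of_le hsv (le_trans (min_le_right _ _) (min_le_right _ _))
  have htw1 : |t - w| < 1 := lt_of_lt_of_le htw (min_le_left _ _)
  have htw2 : |t - w| < δ₁ / 2 := lt_of_lt_of_le htw (le_trans (min_le_right _ _) (min_le_right _ _))
  -- key identities
  have slice : ∀ c : ℝ, |c - w| ≤ 1 → (fun y => f (c, y)) = ⇑g := by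
    intro c hc
    funext y
    rw [hf (c, y)]
    simp [phiBump_eq_one hc]
  have eq1 : U s t (⇑g) x = spaceTimeOp d U (t - s) (⇑f) (s, x) := by
    show _ = U s (s + (t - s)) (fun y => f (s + (t - s), y)) x
    rw [show s + (t - s) = t by ring, slice t htw1.le]
  have eq2 : U v w (⇑g) x = G (v, x) := by
    rw [hG (v, x)]
    show _ = U v (v + (w - v)) (fun y => f (v + (w - v), y)) x
    rw [show v + (w - v) = w by ring, slice w (by simp)]
  have eq3 : G (s, x) = spaceTimeOp d U (w - v) (⇑f) (s, x) := hG (s, x)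
  have termA : |spaceTimeOp d U (t - s) (⇑f) (s, x)
      - spaceTimeOp d U (w - v) (⇑f) (s, x)| ≤ ε / 2 := by
    refine hδ₁ (w - v) (t - s) (by linarith) (by linarith) ?_ (s, x)
    have h1 : |(t - s) - (w - v)| ≤ |t - w| + |s - v| := by
      have : (t - s) - (w - v) = (t - w) - (s - v) := by ring
      rw [this]
      exact abs_sub _ _
    linarith
  have termB : |G (s, x) - G (v, x)| ≤ ε / 2 := by
    have hdist : dist ((s, x) : ℝ × EuclideanSpace ℝ (Fin d)) (v, x) < δ₂ := by
      rw [Prod.dist_eq]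
      simp only [dist_self]
      rw [Real.dist_eq]
      exact max_lt hsv1 hδ₂0
    have := hδ₂ hdist
    rw [Real.dist_eq] at this
    exact this.le
  calc |U s t (⇑g) x - U v w (⇑g) x|
      = |(spaceTimeOp d U (t - s) (⇑f) (s, x) - spaceTimeOp d U (w - v) (⇑f) (s, x))
        + (G (s, x) - G (v, x))| := by rw [eq1, eq2, eq3]; ring_nf
    _ ≤ _ + _ := abs_add_le _ _
    _ ≤ ε / 2 + ε / 2 := add_le_add termA termB
    _ = ε := by ring
end

section
/- Let d ≥ 1 and let (U(s,t))_{s≤t} be a Feller evolution system on C₀(ℝ^d), with space-time semigroup T(t)f(s,x) := (U(s,s+t) f(s+t,·))(x) on C₀(ℝ × ℝ^d). Let f ∈ C₀(ℝ × ℝ^d) be such that: (i) for every x ∈ ℝ^d the map s ↦ f(s,x) is differentiable, the partial derivative ∂₁f is bounded and uniformly continuous on ℝ × ℝ^d, and ∂₁f(s,·) ∈ C₀(ℝ^d) for every s; (ii) for every s ∈ ℝ the function f(s,·) belongs to the domain of the right generator A_s^+ of U, i.e. there exists g_s ∈ C₀(ℝ^d) with ‖(U(s,s+h)f(s,·) −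 f(s,·))/h − g_s‖_∞ → 0 as h↓0. Then for every (s,x) ∈ ℝ × ℝ^d, lim_{t↓0} (T(t)f(s,x) − f(s,x))/t = ∂₁f(s,x) + g_s(x); i.e., the extended pointwise generator L of the space-time semigroup satisfies Lf(s,x) = ∂f/∂s(s,x) + A_s^+[f(s,·)](x). -/
open Filter Topology
open scoped ZeroAtInfty

/-- Pointwise generator formula for the space-time semigroup: if
`f ∈ C₀(ℝ × ℝ^d)` has a partial time derivative `∂₁f` which is bounded, uniformly
continuous and with slices in `C₀(ℝ^d)`, and every time slice `f(s,·)` lies in the domain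
of the right generator `A_s⁺` of `U` (with `A_s⁺ f(s,·) = g s`), then
`lim_{t↓0} (T(t)f(s,x) - f(s,x))/t = ∂₁f(s,x) + (A_s⁺ f(s,·))(x)` for all `(s,x)`. -/
theorem spaceTime_pointwise_generator
    (d : ℕ) (hd : 1 ≤ d)
    (U : ℝ → ℝ → (EuclideanSpace ℝ (Fin d) →C₀ ℝ) →ₗ[ℝ] (EuclideanSpace ℝ (Fin d) →C₀ ℝ))
    (hU : IsFellerEvolution U)
    (f : (ℝ × EuclideanSpace ℝ (Fin d)) →C₀ ℝ)
    (f' : ℝ × EuclideanSpace ℝ (Fin d) → ℝ)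
    -- (i): s ↦ f(s,x) is differentiable with derivative ∂₁f = f'
    (hderiv : ∀ (s : ℝ) (x : EuclideanSpace ℝ (Fin d)),
      HasDerivAt (fun r : ℝ => f (r, x)) (f' (s, x)) s)
    (hbdd : ∃ M : ℝ, ∀ p, |f' p| ≤ M)
    (hucont : UniformContinuous f')
    (hslice : ∀ s : ℝ, ∃ h : EuclideanSpace ℝ (Fin d) →C₀ ℝ, ∀ x, h x = f' (s, x))
    -- (ii): f(s,·) lies in the domain of the right generator A_s⁺, with A_s⁺ f(s,·) = g s
    (g : ℝ → (EuclideanSpace ℝ (Fin d) →C₀ ℝ))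
    (hgen : ∀ s : ℝ, Tendsto
      (fun h : ℝ => ‖h⁻¹ • (U s (s + h) (timeSlice f s) - timeSlice f s) - g s‖)
      (𝓝[>] (0:ℝ)) (𝓝 0)) :
    ∀ (s : ℝ) (x : EuclideanSpace ℝ (Fin d)),
      Tendsto (fun t : ℝ => (spaceTime U t f (s, x) - f (s, x)) / t)
        (𝓝[>] (0:ℝ)) (𝓝 (f' (s, x) + g s x)) := by
  intro s x
  obtain ⟨hs, hhs⟩ := hslice s
  -- evaluation is bounded by the norm
  have heval : ∀ (h : EuclideanSpace ℝ (Fin d) →C₀ ℝ) (y : EuclideanSpace ℝ (Fin d)),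
      |h y| ≤ ‖h‖ := by
    intro h y
    rw [← ZeroAtInftyContinuousMap.norm_toBCF_eq_norm]
    exact h.toBCF.norm_coe_le_norm y
  -- Step 1: difference quotient of slices converges to hs in norm
  have hA : Tendsto (fun t : ℝ => ‖t⁻¹ • (timeSlice f (s + t) - timeSlice f s) - hs‖)
      (𝓝[>] (0:ℝ)) (𝓝 0) := by
    rw [Metric.tendsto_nhds]
    intro ε hε
    obtain ⟨δ, hδ, hδε⟩ := Metric.uniformContinuous_iff.1 hucont (ε/2) (half_pos hε)
    filter_upwards [Ioo_mem_nhdsGT_of_mem ⟨le_refl (0:ℝ), hδ⟩] with t ht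
    have ht0 : 0 < t := ht.1
    have hnorm : ‖t⁻¹ • (timeSlice f (s + t) - timeSlice f s) - hs‖ ≤ ε/2 := by
      rw [← ZeroAtInftyContinuousMap.norm_toBCF_eq_norm]
      rw [BoundedContinuousFunction.norm_le (by positivity)]
      intro y
      obtain ⟨c, hc, hceq⟩ := exists_hasDerivAt_eq_slope (fun r => f (r, y))
        (fun r => f' (r, y)) (lt_add_of_pos_right s ht0)
        (fun r _ => (hderiv r y).continuousAt.continuousWithinAt)
        (fun r _ => hderiv r y)
      have hval : (t⁻¹ • (timeSlice f (s + t) - timeSlice f s) - hs).toBCF y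
          = f' (c, y) - f' (s, y) := by
        have : (timeSlice f (s+t)) y = f (s+t, y) := rfl
        simp only [ZeroAtInftyContinuousMap.toBCF_apply,
          ZeroAtInftyContinuousMap.coe_sub, ZeroAtInftyContinuousMap.coe_smul,
          Pi.sub_apply, Pi.smul_apply, smul_eq_mul]
        have hslicev : (timeSlice f (s+t)) y = f (s+t, y) := rfl
        have hslicev2 : (timeSlice f s) y = f (s, y) := rfl
        rw [hslicev, hslicev2, hhs y, hceq]
        have hts : s + t - s = t := by ring
        rw [hts]
        field_simp
      rw [hval, Real.norm_eq_abs, ← Real.dist_eq]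
      have hdist : dist ((c, y) : ℝ × EuclideanSpace ℝ (Fin d)) (s, y) < δ := by
        have h1 : dist c s < δ := by
          rw [Real.dist_eq, abs_of_pos (sub_pos.2 hc.1)]
          linarith [hc.2, ht.2]
        rw [Prod.dist_eq, dist_self, max_eq_left dist_nonneg]
        exact h1
      exact le_of_lt (hδε hdist)
    calc dist ‖t⁻¹ • (timeSlice f (s + t) - timeSlice f s) - hs‖ 0
        = ‖t⁻¹ • (timeSlice f (s + t) - timeSlice f s) - hs‖ := by
          rw [Real.dist_eq, sub_zero, abs_of_nonneg (norm_nonneg _)]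
      _ ≤ ε/2 := hnorm
      _ < ε := by linarith
  -- Step 2: strong continuity gives ‖U s (s+t) hs - hs‖ → 0
  have hB : Tendsto (fun t : ℝ => ‖U s (s + t) hs - hs‖) (𝓝[>] (0:ℝ)) (𝓝 0) := by
    have h5 := hU.2.2.2.2 hs s s le_rfl
    have hid : U s s hs = hs := by rw [hU.2.2.1 s]; rfl
    have hmap : Tendsto (fun t : ℝ => ((s, s + t) : ℝ × ℝ)) (𝓝[>] (0:ℝ))
        (𝓝[{p : ℝ × ℝ | p.1 ≤ p.2}] (s, s)) := by
      apply tendsto_nhdsWithin_of_tendsto_nhds_of_eventually_within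
      · have : Tendsto (fun t : ℝ => ((s, s + t) : ℝ × ℝ)) (𝓝 0) (𝓝 (s, s + 0)) :=
          (continuous_const.prodMk (continuous_const.add continuous_id)).tendsto 0
        rw [add_zero] at this
        exact this.mono_left nhdsWithin_le_nhds
      · filter_upwards [self_mem_nhdsWithin] with t ht
        exact le_of_lt (lt_add_of_pos_right s ht)
    have := h5.comp hmap
    simp only [Function.comp_def, hid] at this
    exact this
  -- pointwise consequences
  have T1 : Tendsto (fun t : ℝ =>
      (U s (s + t) (t⁻¹ • (timeSlice f (s + t) - timeSlice f s) - hs)) x)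
      (𝓝[>] (0:ℝ)) (𝓝 0) := by
    apply squeeze_zero_norm' _ hA
    filter_upwards [self_mem_nhdsWithin] with t ht
    calc ‖(U s (s + t) (t⁻¹ • (timeSlice f (s + t) - timeSlice f s) - hs)) x‖
        ≤ ‖U s (s + t) (t⁻¹ • (timeSlice f (s + t) - timeSlice f s) - hs)‖ :=
          heval _ x
      _ ≤ ‖t⁻¹ • (timeSlice f (s + t) - timeSlice f s) - hs‖ :=
          hU.1 s (s + t) (by linarith [Set.mem_Ioi.1 ht]) _
  have T2 : Tendsto (fun t : ℝ => (U s (s + t) hs) x) (𝓝[>] (0:ℝ)) (𝓝 (hs x)) := by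
    have h0 : Tendsto (fun t : ℝ => (U s (s + t) hs) x - hs x) (𝓝[>] (0:ℝ)) (𝓝 0) := by
      apply squeeze_zero_norm' _ hB
      filter_upwards with t
      have : (U s (s + t) hs) x - hs x = (U s (s + t) hs - hs) x := by
        simp [ZeroAtInftyContinuousMap.coe_sub]
      rw [this]
      exact heval _ x
    have := h0.add (tendsto_const_nhds (x := hs x))
    simpa using this
  have T3 : Tendsto (fun t : ℝ =>
      (t⁻¹ • (U s (s + t) (timeSlice f s) - timeSlice f s) - g s) x)
      (𝓝[>] (0:ℝ)) (𝓝 0) := by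
    apply squeeze_zero_norm' _ (hgen s)
    filter_upwards with t
    exact heval _ x
  -- combine
  have key := T1.add (T2.add (T3.add (tendsto_const_nhds (x := g s x))))
  have hlim : (0 : ℝ) + (hs x + (0 + g s x)) = f' (s, x) + g s x := by
    rw [hhs x]; ring
  rw [hlim] at key
  apply key.congr'
  filter_upwards [self_mem_nhdsWithin] with t ht
  have ht0 : (0:ℝ) < t := ht
  have htne : t ≠ 0 := ne_of_gt ht0
  have hfs : f (s, x) = (timeSlice f s) x := rfl
  simp only [spaceTime, map_sub, map_smul, ZeroAtInftyContinuousMap.coe_sub,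
    ZeroAtInftyContinuousMap.coe_smul, Pi.sub_apply, Pi.smul_apply, smul_eq_mul]
  rw [hfs]
  field_simp
  ring
end
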